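/- For every even n ≥ 4 and every k ≥ 2, P_DP(C_n, k) = (k−1)^n − 1, which is strictly less than P(C_n, k) = (k−1)^n + (k−1). -/

import Mathlib

open scoped Classical

/-- Number of proper `k`-colorings of `G` (the chromatic polynomial evaluated at `k`). -/
noncomputable def properCount {V : Type*} (G : SimpleGraph V) (k : ℕ) : ℕ :=
  Nat.card {f : V → Fin k // ∀ u v, G.Adj u v → f u ≠ f v}

/-- Number of proper `L`-colorings of `G` for a list assignment `L`. -/
noncomputable def listCount {V : Type*} (G : SimpleGraph V) (L : V → Finset ℕ) : ℕ :=
  Nat.card {f : V → ℕ // (∀ v, f v ∈ L v) ∧ ∀ u v, G.Adj u v → f u ≠ f v}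

/-- The list color function `P_ℓ(G, k)`. -/
noncomputable def listColorFn {V : Type*} (G : SimpleGraph V) (k : ℕ) : ℕ :=
  sInf {m | ∃ L : V → Finset ℕ, (∀ v, (L v).card = k) ∧ m = listCount G L}

/-- `H` (on vertex set `V × Fin k`, with `L v = {v} × Fin k`) is a `k`-fold DP-cover of `G`:
each part is a clique, cross-edges only between parts of adjacent vertices, and the
cross-edges between parts of adjacent vertices form a matching. -/
def IsDPCover {V : Type*} (G : SimpleGraph V) (k : ℕ) (H : SimpleGraph (V × Fin k)) : Prop :=
  (∀ v : V, ∀ i j : Fin k, i ≠ j → H.Adj (v, i) (v, j)) ∧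
  (∀ u v : V, ∀ i j : Fin k, H.Adj (u, i) (v, j) → u = v ∨ G.Adj u v) ∧
  (∀ u v : V, G.Adj u v →
    (∀ i j j' : Fin k, H.Adj (u, i) (v, j) → H.Adj (u, i) (v, j') → j = j') ∧
    (∀ i i' j : Fin k, H.Adj (u, i) (v, j) → H.Adj (u, i') (v, j) → i = i'))

/-- A full `k`-fold DP-cover: the matching between the parts of adjacent vertices is perfect. -/
def IsFullDPCover {V : Type*} (G : SimpleGraph V) (k : ℕ) (H : SimpleGraph (V × Fin k)) : Prop :=
  IsDPCover G k H ∧ ∀ u v : V, G.Adj u v → ∀ i : Fin k, ∃! j : Fin k, H.Adj (u, i) (v, j)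

/-- The number of `H`-colorings of `G` (independent sets of `H` with one vertex in each part,
encoded as functions `V → Fin k`). -/
noncomputable def dpCount {V : Type*} (k : ℕ) (H : SimpleGraph (V × Fin k)) : ℕ :=
  Nat.card {f : V → Fin k // ∀ u v : V, u ≠ v → ¬ H.Adj (u, f u) (v, f v)}

/-- The DP color function `P_DP(G, k)`. -/
noncomputable def dpColorFn {V : Type*} (G : SimpleGraph V) (k : ℕ) : ℕ :=
  sInf {m | ∃ H : SimpleGraph (V × Fin k), IsDPCover G k H ∧ m = dpCount k H}

/-- The dual DP color function `P*_DP(G, k)`. -/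
noncomputable def dualDPColorFn {V : Type*} (G : SimpleGraph V) (k : ℕ) : ℕ :=
  sSup {m | ∃ H : SimpleGraph (V × Fin k), IsFullDPCover G k H ∧ m = dpCount k H}


namespace Stmt18Aux

variable {k : ℕ}

/-- Fiber decomposition equivalence. -/
def fiberEquiv {α β : Type*} (proj : α → β) (P : α → Prop) :
    {x // P x} ≃ Σ c : β, {x : α // proj x = c ∧ P x} where
  toFun x := ⟨proj x.1, x.1, rfl, x.2⟩
  invFun y := ⟨y.2.1, y.2.2.2⟩
  left_inv x := rfl
  right_inv := by rintro ⟨c, x, rfl, hx⟩; rfl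

lemma card_fiber {α β : Type*} [Fintype α] [Fintype β] (proj : α → β) (P : α → Prop) :
    Nat.card {x : α // P x} = ∑ c : β, Nat.card {x : α // proj x = c ∧ P x} := by
  rw [Nat.card_congr (fiberEquiv proj P), Nat.card_eq_fintype_card, Fintype.card_sigma]
  exact Finset.sum_congr rfl fun c _ => (Nat.card_eq_fintype_card).symm

lemma sum_ite_ne {ι M : Type*} [AddCommGroup M] [Fintype ι] [DecidableEq ι] (a : ι) (g : ι → M) :
    ∑ c, (if c = a then 0 else g c) = (∑ c, g c) - g a := by
  have h : ∀ c ∈ Finset.univ, (if c = a then (0:M) else g c) = g c - (if c = a then g c else 0) := by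
    intro c _; split_ifs <;> simp
  rw [Finset.sum_congr rfl h, Finset.sum_sub_distrib, Finset.sum_ite_eq' Finset.univ a g]
  simp

/-- Number of paths `x : Fin (m+1) → Fin k` from `a` to `b` with consecutive entries distinct. -/
noncomputable def PC (k m : ℕ) (a b : Fin k) : ℕ :=
  Nat.card {x : Fin (m+1) → Fin k //
    x 0 = a ∧ x (Fin.last m) = b ∧ ∀ i : Fin m, x i.succ ≠ x i.castSucc}

lemma PC_zero (a b : Fin k) : PC k 0 a b = if a = b then 1 else 0 := by
  unfold PC
  split_ifs with h
  · subst h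
    haveI : Nonempty {x : Fin 1 → Fin k //
        x 0 = a ∧ x (Fin.last 0) = a ∧ ∀ i : Fin 0, x i.succ ≠ x i.castSucc} :=
      ⟨⟨fun _ => a, rfl, rfl, fun i => i.elim0⟩⟩
    haveI : Subsingleton {x : Fin 1 → Fin k //
        x 0 = a ∧ x (Fin.last 0) = a ∧ ∀ i : Fin 0, x i.succ ≠ x i.castSucc} := by
      constructor
      rintro ⟨x, hx, _⟩ ⟨y, hy, _⟩
      apply Subtype.ext
      funext i
      have hi : i = 0 := Subsingleton.elim i 0
      show x i = y i
      rw [hi, hx, hy]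
    exact Nat.card_unique
  · haveI : IsEmpty {x : Fin 1 → Fin k //
        x 0 = a ∧ x (Fin.last 0) = b ∧ ∀ i : Fin 0, x i.succ ≠ x i.castSucc} := by
      constructor
      rintro ⟨x, hx0, hxl, -⟩
      exact h (hx0 ▸ hxl ▸ rfl)
    exact Nat.card_of_isEmpty

/-- removing the first vertex of a path -/
def frontEquiv (m : ℕ) (a b : Fin k) :
    {x : Fin (m+2) → Fin k //
      x 0 = a ∧ x (Fin.last (m+1)) = b ∧ ∀ i : Fin (m+1), x i.succ ≠ x i.castSucc} ≃
    {y : Fin (m+1) → Fin k //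
      y 0 ≠ a ∧ (y (Fin.last m) = b ∧ ∀ i : Fin m, y i.succ ≠ y i.castSucc)} where
  toFun x := ⟨fun i => x.1 i.succ, by
    refine ⟨?_, ?_, ?_⟩
    · show x.1 (Fin.succ 0) ≠ a
      simpa [x.2.1] using x.2.2.2 0
    · show x.1 (Fin.last m).succ = b
      rw [Fin.succ_last]; exact x.2.2.1
    · intro j
      show x.1 j.succ.succ ≠ x.1 j.castSucc.succ
      have h := x.2.2.2 j.succ
      rwa [← Fin.succ_castSucc] at h⟩
  invFun y := ⟨Fin.cons a y.1, by
    refine ⟨Fin.cons_zero _ _, ?_, ?_⟩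
    · rw [← Fin.succ_last, Fin.cons_succ]; exact y.2.2.1
    · intro i
      induction i using Fin.cases with
      | zero => simpa using y.2.1
      | succ j =>
        rw [← Fin.succ_castSucc, Fin.cons_succ, Fin.cons_succ]
        exact y.2.2.2 j⟩
  left_inv x := Subtype.ext (show Fin.cons a (fun i => x.1 i.succ) = x.1 by
    have h := Fin.cons_self_tail x.1
    rwa [x.2.1] at h)
  right_inv y := Subtype.ext (funext fun i =>
    Fin.cons_succ (α := fun _ => Fin k) a y.1 i)

lemma PC_succ (m : ℕ) (a b : Fin k) :
    PC k (m+1) a b = ∑ c : Fin k, if c = a then 0 else PC k m c b := by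
  unfold PC
  rw [Nat.card_congr (frontEquiv m a b),
    card_fiber (fun y : Fin (m+1) → Fin k => y 0)
      (fun y => y 0 ≠ a ∧ (y (Fin.last m) = b ∧ ∀ i : Fin m, y i.succ ≠ y i.castSucc))]
  refine Finset.sum_congr rfl fun c _ => ?_
  split_ifs with hc
  · subst hc
    haveI : IsEmpty {y : Fin (m+1) → Fin k // y 0 = c ∧
        (y 0 ≠ c ∧ (y (Fin.last m) = b ∧ ∀ i : Fin m, y i.succ ≠ y i.castSucc))} :=
      ⟨fun y => y.2.2.1 y.2.1⟩
    exact Nat.card_of_isEmpty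
  · refine Nat.card_congr (Equiv.subtypeEquivRight fun y => ?_)
    constructor
    · rintro ⟨h1, _, h3⟩; exact ⟨h1, h3⟩
    · rintro ⟨h1, h3⟩
      refine ⟨h1, ?_, h3⟩
      rw [h1]; exact hc

lemma PC_formula (m : ℕ) (b a : Fin k) :
    (k : ℤ) * PC k m a b =
      ((k:ℤ)-1)^m - (-1)^m + (if a = b then (k:ℤ) * (-1)^m else 0) := by
  induction m generalizing a with
  | zero =>
    rw [PC_zero]
    split_ifs <;> push_cast <;> ring
  | succ m ih =>
    rw [PC_succ]
    push_cast [apply_ite (fun x : ℕ => (x : ℤ))]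
    rw [Finset.mul_sum]
    have hc : ∀ c ∈ Finset.univ, (k:ℤ) * (if c = a then (0:ℤ) else (PC k m c b : ℤ)) =
        (if c = a then (0:ℤ) else
          ((k:ℤ)-1)^m - (-1)^m + (if c = b then (k:ℤ) * (-1)^m else 0)) := by
      intro c _
      by_cases h1 : c = a
      · simp [h1]
      · simp only [if_neg h1]
        exact ih c
    rw [Finset.sum_congr rfl hc, sum_ite_ne a
      (fun c => ((k:ℤ)-1)^m - (-1)^m + (if c = b then (k:ℤ) * (-1)^m else 0))]
    rw [Finset.sum_add_distrib, Finset.sum_const, Finset.sum_ite_eq' Finset.univ b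
      (fun _ => (k:ℤ) * (-1)^m)]
    simp only [Finset.card_univ, Fintype.card_fin, Finset.mem_univ, if_true, nsmul_eq_mul]
    split_ifs with h <;> ring
noncomputable def comp (n : ℕ) (σ : Fin n → Equiv.Perm (Fin k)) : ℕ → Equiv.Perm (Fin k)
  | 0 => 1
  | i+1 => (if h : i < n then σ ⟨i, h⟩ else 1) * comp n σ i

lemma comp_succ (n : ℕ) (σ : Fin n → Equiv.Perm (Fin k)) (i : ℕ) (h : i < n) :
    comp n σ (i+1) = σ ⟨i, h⟩ * comp n σ i := by
  rw [comp, dif_pos h]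

lemma fin_castSucc_add_one {m : ℕ} (j : Fin m) : (j.castSucc : Fin (m+1)) + 1 = j.succ := by
  have hj := j.isLt
  apply Fin.ext
  simp [Fin.add_def, Fin.val_one']

lemma fin_last_add_one (m : ℕ) : (Fin.last m) + 1 = 0 := by
  apply Fin.ext
  simp [Fin.add_def, Fin.val_one']

lemma forall_split {m : ℕ} (P : Fin (m+1) → Prop) :
    (∀ i, P i) ↔ (∀ j : Fin m, P j.castSucc) ∧ P (Fin.last m) :=
  ⟨fun h => ⟨fun j => h _, h _⟩, fun h i => Fin.lastCases h.2 h.1 i⟩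

lemma constraint_iff (m : ℕ) (σ : Fin (m+1) → Equiv.Perm (Fin k)) (g : Fin (m+1) → Fin k) :
    (∀ i : Fin (m+1),
        comp (m+1) σ ((i+1) : Fin (m+1)).val (g (i+1)) ≠ σ i (comp (m+1) σ i.val (g i))) ↔
      ((∀ j : Fin m, g j.succ ≠ g j.castSucc) ∧
        g 0 ≠ comp (m+1) σ (m+1) (g (Fin.last m))) := by
  rw [forall_split]
  apply and_congr
  · apply forall_congr'
    intro j
    rw [fin_castSucc_add_one]
    have h1 : ((j.succ : Fin (m+1)) : ℕ) = j.val + 1 := Fin.val_succ j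
    have h2 : ((j.castSucc : Fin (m+1)) : ℕ) = j.val := Fin.coe_castSucc j
    have h3 : σ j.castSucc = σ ⟨j.val, by omega⟩ := rfl
    rw [h1, h2, comp_succ (m+1) σ j.val (by omega), h3]
    simp [Equiv.Perm.mul_apply]
  · rw [fin_last_add_one]
    have h0 : ((0 : Fin (m+1)) : ℕ) = 0 := rfl
    have h1 : ((Fin.last m : Fin (m+1)) : ℕ) = m := rfl
    have h3 : σ (Fin.last m) = σ ⟨m, by omega⟩ := rfl
    rw [h0, h1, h3, comp_succ (m+1) σ m (by omega)]
    simp [comp, Equiv.Perm.mul_apply]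

lemma core_count (m : ℕ) (hk : 1 ≤ k) (σ : Fin (m+1) → Equiv.Perm (Fin k)) :
    (Nat.card {f : Fin (m+1) → Fin k // ∀ i, f (i+1) ≠ σ i (f i)} : ℤ) =
      ((k:ℤ)-1)^(m+1) + (-1)^(m+1) *
        ((Nat.card {a : Fin k // comp (m+1) σ (m+1) a = a} : ℤ) - 1) := by
  have hk0 : (k:ℤ) ≠ 0 := by exact_mod_cast (by omega : k ≠ 0)
  set π : Equiv.Perm (Fin k) := comp (m+1) σ (m+1) with hπ
  set P : (Fin (m+1) → Fin k) → Prop := fun g =>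
    (∀ j : Fin m, g j.succ ≠ g j.castSucc) ∧ g 0 ≠ π (g (Fin.last m)) with hP
  have E : {g : Fin (m+1) → Fin k // P g} ≃
      {f : Fin (m+1) → Fin k // ∀ i, f (i+1) ≠ σ i (f i)} :=
    Equiv.subtypeEquiv
      (Equiv.piCongrRight (fun i => (comp (m+1) σ i.val : Fin k ≃ Fin k)))
      (fun g => (constraint_iff m σ g).symm)
  rw [← Nat.card_congr E]
  -- fiber decomposition over the endpoints
  have hfib : ∀ p : Fin k × Fin k,
      Nat.card {g : Fin (m+1) → Fin k // (g 0, g (Fin.last m)) = p ∧ P g} =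
        if p.1 = π p.2 then 0 else PC k m p.1 p.2 := by
    rintro ⟨a, b⟩
    split_ifs with h
    · haveI : IsEmpty {g : Fin (m+1) → Fin k // (g 0, g (Fin.last m)) = (a, b) ∧ P g} := by
        constructor
        rintro ⟨g, hg, -, htw⟩
        rw [Prod.mk.injEq] at hg
        exact htw (by rw [hg.1, hg.2]; exact h)
      exact Nat.card_of_isEmpty
    · unfold PC
      refine Nat.card_congr (Equiv.subtypeEquivRight fun g => ?_)
      constructor
      · rintro ⟨hg, hch, -⟩
        obtain ⟨hg0, hgl⟩ := Prod.ext_iff.mp hg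
        exact ⟨hg0, hgl, hch⟩
      · rintro ⟨hg0, hgl, hch⟩
        refine ⟨Prod.ext hg0 hgl, hch, ?_⟩
        rw [hg0, hgl]
        exact h
  have hcardP : (Nat.card {g : Fin (m+1) → Fin k // P g} : ℤ) =
      ∑ p : Fin k × Fin k, if p.1 = π p.2 then 0 else (PC k m p.1 p.2 : ℤ) := by
    rw [card_fiber (fun g : Fin (m+1) → Fin k => (g 0, g (Fin.last m))) P,
      Finset.sum_congr rfl (fun p _ => hfib p)]
    push_cast [apply_ite (fun x : ℕ => (x : ℤ))]
    rfl
  apply mul_left_cancel₀ hk0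
  rw [hcardP, Finset.mul_sum]
  have step1 : ∀ p : Fin k × Fin k,
      (k:ℤ) * (if p.1 = π p.2 then 0 else (PC k m p.1 p.2 : ℤ)) =
        (if p.1 = π p.2 then 0 else (k:ℤ) * PC k m p.1 p.2) := by
    intro p; split_ifs <;> ring
  rw [Finset.sum_congr rfl (fun p _ => step1 p), Fintype.sum_prod_type_right]
  have step2 : ∀ b : Fin k,
      (∑ a : Fin k, if a = π b then 0 else (k:ℤ) * PC k m a b) =
        (k:ℤ) * (((k:ℤ)-1)^m - (-1)^m) + (k:ℤ) * (-1)^m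
          - (((k:ℤ)-1)^m - (-1)^m) - (if π b = b then (k:ℤ) * (-1)^m else 0) := by
    intro b
    rw [sum_ite_ne (π b) (fun a => (k:ℤ) * PC k m a b)]
    rw [Finset.sum_congr rfl (fun a _ => PC_formula m b a), PC_formula m b (π b)]
    rw [Finset.sum_add_distrib, Finset.sum_const,
      Finset.sum_ite_eq' Finset.univ b (fun _ => (k:ℤ) * (-1)^m)]
    simp only [Finset.card_univ, Fintype.card_fin, Finset.mem_univ, if_true, nsmul_eq_mul]
    ring
  rw [Finset.sum_congr rfl (fun b _ => step2 b)]
  rw [Finset.sum_sub_distrib, Finset.sum_const, Finset.sum_ite, Finset.sum_const,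
    Finset.sum_const_zero, add_zero]
  have hF : (Finset.filter (fun b => π b = b) Finset.univ).card =
      Nat.card {a : Fin k // π a = a} := by
    rw [Nat.card_eq_fintype_card, Fintype.card_subtype]
  rw [hF]
  simp only [Finset.card_univ, Fintype.card_fin, nsmul_eq_mul]
  rw [pow_succ ((k:ℤ)-1) m, pow_succ (-1:ℤ) m]
  ring
section Graph

open SimpleGraph

variable {m : ℕ}

lemma fin_val_add_one (u : Fin (m+4)) : (u + 1).val = (u.val + 1) % (m + 4) := by
  simp [Fin.add_def, Fin.val_one']

lemma mod_succ_eq {a b : ℕ} (ha : a < b + 4) :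
    (a + 1) % (b + 4) = if a = b + 3 then 0 else a + 1 := by
  split_ifs with h
  · subst h
    rw [show b + 3 + 1 = b + 4 from rfl, Nat.mod_self]
  · exact Nat.mod_eq_of_lt (by omega)

lemma fin_add_one_ne (u : Fin (m+4)) : u + 1 ≠ u := by
  intro h
  have h2 := congrArg Fin.val h
  rw [fin_val_add_one, mod_succ_eq u.isLt] at h2
  have hu := u.isLt
  split_ifs at h2 <;> omega

lemma fin_no_two_cycle {u v : Fin (m+4)} (h1 : u + 1 = v) (h2 : v + 1 = u) : False := by
  have h1' := congrArg Fin.val h1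
  have h2' := congrArg Fin.val h2
  rw [fin_val_add_one, mod_succ_eq u.isLt] at h1'
  rw [fin_val_add_one, mod_succ_eq v.isLt] at h2'
  have hu := u.isLt
  have hv := v.isLt
  split_ifs at h1' h2' <;> omega

lemma cyc_adj {u v : Fin (m+4)} :
    (cycleGraph (m+4)).Adj u v ↔ u = v + 1 ∨ v = u + 1 := by
  rw [show (m+4) = (m+2)+2 from rfl] at *
  rw [SimpleGraph.cycleGraph_adj]
  constructor
  · rintro (h | h)
    · exact Or.inl (eq_add_of_sub_eq' h)
    · exact Or.inr (eq_add_of_sub_eq' h)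
  · rintro (h | h)
    · exact Or.inl (sub_eq_of_eq_add' h)
    · exact Or.inr (sub_eq_of_eq_add' h)

variable {k : ℕ}

/-- The cover of the cycle given by permutations on each edge. -/
def pcov (m k : ℕ) (σ : Fin (m+4) → Equiv.Perm (Fin k)) : SimpleGraph (Fin (m+4) × Fin k) where
  Adj p q := (p.1 = q.1 ∧ p.2 ≠ q.2) ∨ (p.1 + 1 = q.1 ∧ q.2 = σ p.1 p.2) ∨
    (q.1 + 1 = p.1 ∧ p.2 = σ q.1 q.2)
  symm := by
    refine ⟨?_⟩
    rintro p q (⟨h1, h2⟩ | ⟨h1, h2⟩ | ⟨h1, h2⟩)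
    · exact Or.inl ⟨h1.symm, h2.symm⟩
    · exact Or.inr (Or.inr ⟨h1, h2⟩)
    · exact Or.inr (Or.inl ⟨h1, h2⟩)
  loopless := by
    refine ⟨?_⟩
    rintro p (⟨h1, h2⟩ | ⟨h1, h2⟩ | ⟨h1, h2⟩)
    · exact h2 rfl
    · exact fin_add_one_ne _ h1
    · exact fin_add_one_ne _ h1

lemma pcov_adj {σ : Fin (m+4) → Equiv.Perm (Fin k)} {p q : Fin (m+4) × Fin k} :
    (pcov m k σ).Adj p q ↔ (p.1 = q.1 ∧ p.2 ≠ q.2) ∨ (p.1 + 1 = q.1 ∧ q.2 = σ p.1 p.2) ∨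
      (q.1 + 1 = p.1 ∧ p.2 = σ q.1 q.2) := Iff.rfl

lemma pcov_isDPCover (σ : Fin (m+4) → Equiv.Perm (Fin k)) :
    IsDPCover (cycleGraph (m+4)) k (pcov m k σ) := by
  refine ⟨fun v i j hij => Or.inl ⟨rfl, hij⟩, ?_, ?_⟩
  · rintro u v i j (⟨h1, -⟩ | ⟨h1, -⟩ | ⟨h1, -⟩)
    · exact Or.inl h1
    · exact Or.inr (cyc_adj.mpr (Or.inr h1.symm))
    · exact Or.inr (cyc_adj.mpr (Or.inl h1.symm))
  · intro u v huv
    have hne : u ≠ v := huv.ne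
    constructor
    · rintro i j j' (⟨h1, -⟩ | ⟨h1, h2⟩ | ⟨h1, h2⟩) (⟨h1', -⟩ | ⟨h1', h2'⟩ | ⟨h1', h2'⟩)
      · exact absurd h1 hne
      · exact absurd h1 hne
      · exact absurd h1 hne
      · exact absurd h1' hne
      · exact h2.trans h2'.symm
      · exact absurd (fin_no_two_cycle h1 h1') id
      · exact absurd h1' hne
      · exact absurd (fin_no_two_cycle h1' h1) id
      · exact (σ v).injective (h2.symm.trans h2')
    · rintro i i' j (⟨h1, -⟩ | ⟨h1, h2⟩ | ⟨h1, h2⟩) (⟨h1', -⟩ | ⟨h1', h2'⟩ | ⟨h1', h2'⟩)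
      · exact absurd h1 hne
      · exact absurd h1 hne
      · exact absurd h1 hne
      · exact absurd h1' hne
      · exact (σ u).injective (h2.symm.trans h2')
      · exact absurd (fin_no_two_cycle h1 h1') id
      · exact absurd h1' hne
      · exact absurd (fin_no_two_cycle h1' h1) id
      · exact h2.trans h2'.symm

lemma pcov_count (σ : Fin (m+4) → Equiv.Perm (Fin k)) :
    dpCount k (pcov m k σ) =
      Nat.card {f : Fin (m+4) → Fin k // ∀ i, f (i+1) ≠ σ i (f i)} := by
  unfold dpCount
  refine Nat.card_congr (Equiv.subtypeEquivRight fun f => ?_)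
  constructor
  · intro h i
    have hne : i ≠ i + 1 := fun e => fin_add_one_ne i e.symm
    intro heq
    exact h i (i+1) hne (Or.inr (Or.inl ⟨rfl, heq⟩))
  · rintro h u v huv (⟨h1, -⟩ | ⟨h1, h2⟩ | ⟨h1, h2⟩)
    · exact huv h1
    · exact h u (by rw [show u + 1 = v from h1]; exact h2)
    · exact h v (by rw [show v + 1 = u from h1]; exact h2)

lemma exists_perm_extend (R : Fin k → Fin k → Prop)
    (hfun : ∀ i j j', R i j → R i j' → j = j')
    (hinj : ∀ i i' j, R i j → R i' j → i = i') :
    ∃ σ : Equiv.Perm (Fin k), ∀ i j, R i j → σ i = j := by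
  let e : {i // ∃ j, R i j} ≃ {j // ∃ i, R i j} :=
    { toFun := fun x => ⟨Classical.choose x.2, x.1, Classical.choose_spec x.2⟩
      invFun := fun y => ⟨Classical.choose y.2, y.1, Classical.choose_spec y.2⟩
      left_inv := by
        rintro ⟨i, hi⟩
        apply Subtype.ext
        have hc : ∃ i', R i' (Classical.choose hi) := ⟨i, Classical.choose_spec hi⟩
        exact hinj _ _ _ (Classical.choose_spec hc) (Classical.choose_spec hi)
      right_inv := by
        rintro ⟨j, hj⟩
        apply Subtype.ext
        have hc : ∃ j', R (Classical.choose hj) j' := ⟨j, Classical.choose_spec hj⟩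
        exact hfun _ _ _ (Classical.choose_spec hc) (Classical.choose_spec hj) }
  refine ⟨e.extendSubtype, fun i j hR => ?_⟩
  have hp : ∃ j', R i j' := ⟨j, hR⟩
  rw [Equiv.extendSubtype_apply_of_mem e i hp]
  show Classical.choose hp = j
  exact hfun i _ j (Classical.choose_spec hp) hR

lemma dpCount_mono {H H' : SimpleGraph (Fin (m+4) × Fin k)} (hle : H ≤ H') :
    dpCount k H' ≤ dpCount k H := by
  apply Nat.card_le_card_of_injective
    (fun f => (⟨f.1, fun u v huv ha => f.2 u v huv (hle ha)⟩ :
      {f : Fin (m+4) → Fin k // ∀ u v, u ≠ v → ¬ H.Adj (u, f u) (v, f v)}))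
  intro f g hfg
  have h2 := congrArg Subtype.val hfg
  exact Subtype.ext h2

lemma dp_lower (H : SimpleGraph (Fin (m+4) × Fin k))
    (hH : IsDPCover (cycleGraph (m+4)) k H) :
    ∃ σ : Fin (m+4) → Equiv.Perm (Fin k), H ≤ pcov m k σ := by
  obtain ⟨h1, h2, h3⟩ := hH
  have hpick : ∀ u : Fin (m+4), ∃ σu : Equiv.Perm (Fin k),
      ∀ i j, H.Adj (u, i) (u+1, j) → σu i = j := by
    intro u
    have hadj : (cycleGraph (m+4)).Adj u (u+1) := cyc_adj.mpr (Or.inr rfl)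
    obtain ⟨hf, hi⟩ := h3 u (u+1) hadj
    exact exists_perm_extend _ (fun i j j' => hf i j j') (fun i i' j => hi i i' j)
  choose σ hσ using hpick
  refine ⟨σ, ?_⟩
  rintro ⟨u, i⟩ ⟨v, j⟩ hadj
  by_cases huv : u = v
  · subst huv
    have hij : i ≠ j := by
      intro h
      subst h
      exact H.loopless.irrefl _ hadj
    exact Or.inl ⟨rfl, hij⟩
  · rcases h2 u v i j hadj with h | h
    · exact absurd h huv
    · rcases cyc_adj.mp h with h4 | h4
      · refine Or.inr (Or.inr ⟨h4.symm, ?_⟩)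
        have hs : H.Adj (v, j) (v+1, i) := by
          have := hadj.symm
          rwa [h4] at this
        exact (hσ v j i hs).symm
      · refine Or.inr (Or.inl ⟨h4.symm, ?_⟩)
        have hs : H.Adj (u, i) (u+1, j) := by rwa [h4] at hadj
        exact (hσ u i j hs).symm

lemma comp_const_one (n j : ℕ) : comp (k := k) n (fun _ => 1) j = 1 := by
  induction j with
  | zero => rfl
  | succ j ih =>
    rw [comp, ih, mul_one]
    split <;> rfl

lemma comp_shift_aux (m : ℕ) (r : Equiv.Perm (Fin k)) (j : ℕ) (hj : j ≤ m + 3) :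
    comp (m+4) (fun i : Fin (m+4) => if i.val = m+3 then r else 1) j = 1 := by
  induction j with
  | zero => rfl
  | succ j ih =>
    rw [comp_succ (m+4) _ j (by omega), ih (by omega), mul_one]
    split_ifs with h
    · exfalso
      have hj2 : j = m + 3 := h
      omega
    · rfl

lemma comp_shift (m : ℕ) (r : Equiv.Perm (Fin k)) :
    comp (m+4) (fun i : Fin (m+4) => if i.val = m+3 then r else 1) (m+4) = r := by
  rw [show m + 4 = (m+3) + 1 from rfl,
    comp_succ (m+4) _ (m+3) (by omega), comp_shift_aux m r (m+3) le_rfl, mul_one]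
  split_ifs with h
  · rfl
  · exact absurd rfl h

lemma fix_one : Nat.card {a : Fin k // (1 : Equiv.Perm (Fin k)) a = a} = k := by
  rw [Nat.card_congr (Equiv.subtypeUnivEquiv (fun a => Equiv.Perm.one_apply a)), Nat.card_eq_fintype_card,
    Fintype.card_fin]

lemma mod_succ_eq2 {a b : ℕ} (ha : a < b + 2) :
    (a + 1) % (b + 2) = if a = b + 1 then 0 else a + 1 := by
  split_ifs with h
  · subst h
    rw [show b + 1 + 1 = b + 2 from rfl, Nat.mod_self]
  · exact Nat.mod_eq_of_lt (by omega)

lemma fix_addLeft (k' : ℕ) :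
    Nat.card {a : Fin (k'+2) // (Equiv.addLeft (1 : Fin (k'+2))) a = a} = 0 := by
  haveI : IsEmpty {a : Fin (k'+2) // (Equiv.addLeft (1 : Fin (k'+2))) a = a} := by
    constructor
    rintro ⟨a, ha⟩
    have h : (1 : Fin (k'+2)) + a = a := ha
    rw [add_comm 1 a] at h
    have h2 := congrArg Fin.val h
    have h3 : (a + 1).val = (a.val + 1) % (k'+2) := by
      simp [Fin.add_def, Fin.val_one']
    rw [h3, mod_succ_eq2 a.isLt] at h2
    have := a.isLt
    split_ifs at h2 <;> omega
  exact Nat.card_of_isEmpty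

end Graph

end Stmt18Aux

theorem stmt18 (n k : ℕ) (hn : 4 ≤ n) (heven : Even n) (hk : 2 ≤ k) :
    dpColorFn (SimpleGraph.cycleGraph n) k = (k - 1) ^ n - 1 ∧
    properCount (SimpleGraph.cycleGraph n) k = (k - 1) ^ n + (k - 1) ∧
    dpColorFn (SimpleGraph.cycleGraph n) k <
      properCount (SimpleGraph.cycleGraph n) k := by
  classical
  obtain ⟨m, rfl⟩ : ∃ m, n = m + 4 := ⟨n - 4, by omega⟩
  obtain ⟨k', rfl⟩ : ∃ k', k = k' + 2 := ⟨k - 2, by omega⟩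
  have hone : ((-1 : ℤ)) ^ (m + 4) = 1 := heven.neg_one_pow
  have hsub : k' + 2 - 1 = k' + 1 := by omega
  have hTz : (((k'+1)^(m+4) : ℕ) : ℤ) = ((k'+2 : ℤ) - 1)^(m+4) := by push_cast; ring
  have hT1 : 1 ≤ (k'+1)^(m+4) := Nat.one_le_pow _ _ (by omega)
  have hcount : ∀ σ : Fin (m+4) → Equiv.Perm (Fin (k'+2)),
      (Nat.card {f : Fin (m+4) → Fin (k'+2) // ∀ i, f (i+1) ≠ σ i (f i)} : ℤ) =
        ((k'+2 : ℤ) - 1)^(m+4) +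
          ((Nat.card {a : Fin (k'+2) // Stmt18Aux.comp (m+4) σ (m+4) a = a} : ℤ) - 1) := by
    intro σ
    have h2 : (Nat.card {f : Fin (m+4) → Fin (k'+2) // ∀ i, f (i+1) ≠ σ i (f i)} : ℤ) =
        ((k'+2 : ℤ) - 1)^(m+4) + (-1 : ℤ)^(m+4) *
          ((Nat.card {a : Fin (k'+2) // Stmt18Aux.comp (m+4) σ (m+4) a = a} : ℤ) - 1) :=
      Stmt18Aux.core_count (k := k'+2) (m+3) (by omega) σ
    rw [h2, hone, one_mul]
  -- proper count
  have hprop : (properCount (SimpleGraph.cycleGraph (m+4)) (k'+2) : ℤ) =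
      ((k'+2 : ℤ) - 1)^(m+4) + ((k'+2 : ℤ) - 1) := by
    have e : {f : Fin (m+4) → Fin (k'+2) //
        ∀ u v, (SimpleGraph.cycleGraph (m+4)).Adj u v → f u ≠ f v} ≃
        {f : Fin (m+4) → Fin (k'+2) //
          ∀ i, f (i+1) ≠ (1 : Equiv.Perm (Fin (k'+2))) (f i)} := by
      refine Equiv.subtypeEquivRight fun f => ?_
      constructor
      · intro h i
        have hadj : (SimpleGraph.cycleGraph (m+4)).Adj i (i+1) :=
          Stmt18Aux.cyc_adj.mpr (Or.inr rfl)
        simpa using (h i (i+1) hadj).symm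
      · intro h u v hadj
        rcases Stmt18Aux.cyc_adj.mp hadj with h4 | h4
        · rw [h4]
          simpa using h v
        · rw [h4]
          have hu := h u
          simp only [Equiv.Perm.one_apply] at hu
          exact fun he => hu he.symm
    unfold properCount
    rw [Nat.card_congr e, hcount (fun _ => 1), Stmt18Aux.comp_const_one,
      Stmt18Aux.fix_one]
    push_cast
    ring
  have hpropN : properCount (SimpleGraph.cycleGraph (m+4)) (k'+2) =
      (k'+1)^(m+4) + (k'+1) := by
    have h2 : (properCount (SimpleGraph.cycleGraph (m+4)) (k'+2) : ℤ) =
        (((k'+1)^(m+4) : ℕ) : ℤ) + ((k'+1 : ℕ) : ℤ) := by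
      rw [hprop, hTz]
      push_cast
      ring
    exact_mod_cast h2
  -- dp color fn
  have hub : dpCount (k'+2) (Stmt18Aux.pcov m (k'+2)
      (fun i => if i.val = m+3 then Equiv.addLeft (1 : Fin (k'+2)) else 1)) =
      (k'+1)^(m+4) - 1 := by
    rw [Stmt18Aux.pcov_count]
    have h := hcount (fun i => if i.val = m+3 then Equiv.addLeft (1 : Fin (k'+2)) else 1)
    rw [Stmt18Aux.comp_shift m (Equiv.addLeft (1 : Fin (k'+2))),
      Stmt18Aux.fix_addLeft k'] at h
    apply @Nat.cast_injective ℤ _ _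
    rw [h, Nat.cast_sub hT1, hTz]
    push_cast
    ring
  have hmem : ((k'+1)^(m+4) - 1) ∈
      {mm | ∃ H : SimpleGraph (Fin (m+4) × Fin (k'+2)),
        IsDPCover (SimpleGraph.cycleGraph (m+4)) (k'+2) H ∧ mm = dpCount (k'+2) H} :=
    ⟨_, Stmt18Aux.pcov_isDPCover _, hub.symm⟩
  have hlb : ∀ x ∈ {mm | ∃ H : SimpleGraph (Fin (m+4) × Fin (k'+2)),
      IsDPCover (SimpleGraph.cycleGraph (m+4)) (k'+2) H ∧ mm = dpCount (k'+2) H},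
      (k'+1)^(m+4) - 1 ≤ x := by
    rintro x ⟨H, hH, rfl⟩
    obtain ⟨σ, hle⟩ := Stmt18Aux.dp_lower H hH
    have h1 := Stmt18Aux.dpCount_mono hle
    have h2 := hcount σ
    rw [← Stmt18Aux.pcov_count, ← hTz] at h2
    have h3 : (0:ℤ) ≤
        (Nat.card {a : Fin (k'+2) // Stmt18Aux.comp (m+4) σ (m+4) a = a} : ℤ) :=
      Nat.cast_nonneg _
    omega
  have hdp : dpColorFn (SimpleGraph.cycleGraph (m+4)) (k'+2) = (k'+1)^(m+4) - 1 := by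
    unfold dpColorFn
    exact le_antisymm (Nat.sInf_le hmem) (le_csInf ⟨_, hmem⟩ hlb)
  rw [hsub]
  exact ⟨hdp, hpropN, by rw [hdp, hpropN]; omega⟩
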